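/- Let d ≥ 1, let X₁,…,Xₙ be i.i.d. ℝ^d-valued random variables whose common law has density f with respect to Lebesgue measure, let H be an invertible d×d real matrix, let K : ℝ^d → ℝ be bounded, measurable and compactly supported, and let g : ℝ^d → ℝ be bounded and measurable. Then for every x ∈ ℝ^d, the variance of W₁ₙ(x) = (1/n) ∑_{i=1}^n K_H(X_i − x) g(X_i) satisfies Var(W₁ₙ(x)) ≤ (1/(n·|det H|)) ∫_{ℝ^d} K(p)² g(x + Hp)² f(x + Hp) dp. -/

import Mathlib

open MeasureTheory ProbabilityTheory Filter
open scoped ENNReal NNReal Topology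

noncomputable section

/-- The rescaled kernel `K_H(v) = |det H|⁻¹ * K (H⁻¹ v)`. -/
def kernelScaled {d : ℕ} (H : Matrix (Fin d) (Fin d) ℝ) (K : (Fin d → ℝ) → ℝ)
    (v : Fin d → ℝ) : ℝ :=
  |H.det|⁻¹ * K (H⁻¹.mulVec v)

/-- Variance bound in Lemma 1:
`Var(W₁ₙ(x)) ≤ (1/(n |det H|)) ∫ K(p)² g(x + Hp)² f(x + Hp) dp`. -/
theorem variance_W1n {d n : ℕ} (hd : 1 ≤ d) (hn : 1 ≤ n)
    {Ω : Type*} [MeasurableSpace Ω] (μ : Measure Ω) [IsProbabilityMeasure μ]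
    (X : Fin n → Ω → (Fin d → ℝ)) (hXmeas : ∀ i, Measurable (X i))
    (hindep : iIndepFun X μ)
    (f : (Fin d → ℝ) → ℝ) (hfmeas : Measurable f) (hfnonneg : ∀ y, 0 ≤ f y)
    (hlaw : ∀ i, μ.map (X i) = volume.withDensity (fun y => ENNReal.ofReal (f y)))
    (H : Matrix (Fin d) (Fin d) ℝ) (hH : H.det ≠ 0)
    (K : (Fin d → ℝ) → ℝ) (hKmeas : Measurable K) (hKbd : ∃ C, ∀ u, |K u| ≤ C)
    (hKsupp : HasCompactSupport K)
    (g : (Fin d → ℝ) → ℝ) (hgmeas : Measurable g) (hgbd : ∃ C, ∀ u, |g u| ≤ C)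
    (x : Fin d → ℝ) :
    variance (fun ω => (n : ℝ)⁻¹ * ∑ i, kernelScaled H K (X i ω - x) * g (X i ω)) μ ≤
      ((n : ℝ) * |H.det|)⁻¹ *
        ∫ p, (K p) ^ 2 * (g (x + H.mulVec p)) ^ 2 * f (x + H.mulVec p) := by
  obtain ⟨CK, hCK⟩ := hKbd
  obtain ⟨Cg, hCg⟩ := hgbd
  set φ : (Fin d → ℝ) → ℝ := fun y => kernelScaled H K (y - x) * g y with hφdef
  have hmulVec : Measurable fun v : Fin d → ℝ => H⁻¹.mulVec v := by
    apply measurable_pi_lambda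
    intro i
    simp only [Matrix.mulVec, dotProduct]
    exact Finset.measurable_sum _ fun j _ => (measurable_pi_apply j).const_mul _
  have hφmeas : Measurable φ := by
    apply Measurable.mul _ hgmeas
    exact (measurable_const.mul (hKmeas.comp (hmulVec.comp (measurable_id.sub measurable_const))))
  have hφbd : ∀ y, |φ y| ≤ |H.det|⁻¹ * CK * Cg := by
    intro y
    have h1 : |φ y| = |H.det|⁻¹ * |K (H⁻¹.mulVec (y - x))| * |g y| := by
      simp [hφdef, kernelScaled, abs_mul, abs_of_nonneg (inv_nonneg.2 (abs_nonneg H.det)), mul_assoc]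
    rw [h1]
    have hCK0 : (0:ℝ) ≤ CK := le_trans (abs_nonneg _) (hCK 0)
    have hd0 : (0:ℝ) ≤ |H.det|⁻¹ := inv_nonneg.2 (abs_nonneg _)
    exact mul_le_mul (mul_le_mul_of_nonneg_left (hCK _) hd0) (hCg y) (abs_nonneg _)
      (by positivity)
  -- the composed random variables
  set Y : Fin n → Ω → ℝ := fun i ω => φ (X i ω) with hYdef
  have hYmeas : ∀ i, Measurable (Y i) := fun i => hφmeas.comp (hXmeas i)
  have hYmem : ∀ i, MemLp (Y i) 2 μ := by
    intro i
    apply MemLp.of_bound ((hYmeas i).aestronglyMeasurable) (|H.det|⁻¹ * CK * Cg)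
    filter_upwards with ω
    simpa [Real.norm_eq_abs] using hφbd (X i ω)
  have hYindep : iIndepFun Y μ :=
    hindep.comp (fun _ => φ) (fun _ => hφmeas)
  -- step 1: variance of the average
  have hsum : (fun ω => (n : ℝ)⁻¹ * ∑ i, kernelScaled H K (X i ω - x) * g (X i ω))
      = fun ω => (n : ℝ)⁻¹ * (∑ i, Y i) ω := by
    funext ω; simp [hYdef, hφdef]
  have hvar1 : variance (fun ω => (n : ℝ)⁻¹ * ∑ i, kernelScaled H K (X i ω - x) * g (X i ω)) μ
      = ((n : ℝ)⁻¹) ^ 2 * ∑ i, variance (Y i) μ := by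
    rw [hsum, variance_const_mul, IndepFun.variance_sum (fun i _ => hYmem i)
      (fun i _ j _ hij => hYindep.indepFun hij)]
  -- step 2: each variance bounded by second moment
  have hvar2 : ∀ i, variance (Y i) μ ≤ ∫ ω, (Y i ω) ^ 2 ∂μ := by
    intro i
    simpa using variance_le_expectation_sq (X := Y i) ((hYmeas i).aestronglyMeasurable)
  -- step 3: compute the second moment
  set I : ℝ := ∫ p, (K p) ^ 2 * (g (x + H.mulVec p)) ^ 2 * f (x + H.mulVec p) with hI
  have hmom : ∀ i, ∫ ω, (Y i ω) ^ 2 ∂μ = |H.det|⁻¹ * I := by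
    intro i
    have h1 : ∫ ω, (Y i ω) ^ 2 ∂μ = ∫ y, (φ y) ^ 2 ∂(μ.map (X i)) := by
      rw [integral_map (hXmeas i).aemeasurable (hφmeas.pow_const 2).aestronglyMeasurable]
    rw [h1, hlaw i]
    have h2 : (fun y => ENNReal.ofReal (f y)) = fun y => ((f y).toNNReal : ℝ≥0∞) := rfl
    rw [h2, integral_withDensity_eq_integral_smul hfmeas.real_toNNReal]
    have h3 : ∀ y, (f y).toNNReal • (φ y) ^ 2 = f y * (φ y) ^ 2 := by
      intro y
      simp [NNReal.smul_def, Real.coe_toNNReal _ (hfnonneg y)]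
    simp_rw [h3]
    -- now change of variables
    set ψ : (Fin d → ℝ) → ℝ := fun y => f y * (φ y) ^ 2 with hψ
    have htrans : ∫ y, ψ y = ∫ z, ψ (x + z) := (integral_add_left_eq_self ψ x).symm
    have hmap : Measure.map (Matrix.toLin' H) volume
        = ENNReal.ofReal |H.det⁻¹| • (volume : Measure (Fin d → ℝ)) := by
      simpa [abs_inv] using Real.map_matrix_volume_pi_eq_smul_volume_pi hH
    have hvol : (volume : Measure (Fin d → ℝ))
        = ENNReal.ofReal |H.det| • Measure.map (Matrix.toLin' H) volume := by
      rw [hmap, smul_smul, ← ENNReal.ofReal_mul (abs_nonneg _), abs_inv,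
        mul_inv_cancel₀ (abs_ne_zero.2 hH), ENNReal.ofReal_one, one_smul]
    have hmulVecH : Measurable fun v : Fin d → ℝ => H.mulVec v := by
      apply measurable_pi_lambda
      intro i
      simp only [Matrix.mulVec, dotProduct]
      exact Finset.measurable_sum _ fun j _ => (measurable_pi_apply j).const_mul _
    have hψmeas : Measurable ψ := hfmeas.mul (hφmeas.pow_const 2)
    have hψx : Measurable fun z : Fin d → ℝ => ψ (x + z) :=
      hψmeas.comp (measurable_const.add measurable_id)
    have htoLin : Measurable fun v : Fin d → ℝ => (Matrix.toLin' H) v := by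
      simpa [Matrix.toLin'_apply] using hmulVecH
    have hcomp : ∫ z, ψ (x + z) ∂(Measure.map (Matrix.toLin' H) volume)
        = ∫ p, ψ (x + H.mulVec p) := by
      rw [integral_map htoLin.aemeasurable hψx.aestronglyMeasurable]
      simp [Matrix.toLin'_apply]
    have h4 : ∫ z, ψ (x + z) = |H.det| * ∫ p, ψ (x + H.mulVec p) := by
      conv_lhs => rw [hvol]
      rw [integral_smul_measure, hcomp, ENNReal.toReal_ofReal (abs_nonneg _)]
      simp
    have h5 : ∀ p, ψ (x + H.mulVec p)
        = |H.det|⁻¹ * |H.det|⁻¹ * ((K p) ^ 2 * (g (x + H.mulVec p)) ^ 2 * f (x + H.mulVec p)) := by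
      intro p
      have hinv : H⁻¹.mulVec (x + H.mulVec p - x) = p := by
        rw [add_sub_cancel_left, Matrix.mulVec_mulVec,
          Matrix.nonsing_inv_mul H (isUnit_iff_ne_zero.2 hH), Matrix.one_mulVec]
      simp only [hψ, hφdef, kernelScaled, hinv]
      ring
    calc ∫ y, ψ y = |H.det| * ∫ p, ψ (x + H.mulVec p) := by rw [htrans, h4]
      _ = |H.det| * (|H.det|⁻¹ * |H.det|⁻¹ * I) := by
          congr 1
          simp_rw [h5]
          rw [integral_const_mul]
      _ = |H.det|⁻¹ * I := by
          have h0 : |H.det| ≠ 0 := abs_ne_zero.2 hH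
          rw [show |H.det| * (|H.det|⁻¹ * |H.det|⁻¹ * I)
            = (|H.det| * |H.det|⁻¹) * (|H.det|⁻¹ * I) by ring, mul_inv_cancel₀ h0, one_mul]
  -- put everything together
  rw [hvar1]
  have hsum2 : ∑ i : Fin n, variance (Y i) μ ≤ (n : ℝ) * (|H.det|⁻¹ * I) := by
    calc ∑ i : Fin n, variance (Y i) μ ≤ ∑ i : Fin n, (|H.det|⁻¹ * I) := by
          apply Finset.sum_le_sum
          intro i _
          rw [← hmom i]
          exact hvar2 i
      _ = (n : ℝ) * (|H.det|⁻¹ * I) := by simp [mul_comm]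
  have hn0 : (0:ℝ) < n := by exact_mod_cast hn
  calc ((n : ℝ)⁻¹) ^ 2 * ∑ i, variance (Y i) μ
      ≤ ((n : ℝ)⁻¹) ^ 2 * ((n : ℝ) * (|H.det|⁻¹ * I)) := by
        apply mul_le_mul_of_nonneg_left hsum2 (by positivity)
    _ = ((n : ℝ) * |H.det|)⁻¹ * I := by
        rw [mul_inv]
        field_simp
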